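/- Let V be a finite-dimensional complex vector space, let B be a nondegenerate symmetric bilinear form on V, and let g : V → V be a linear automorphism satisfying B(g(x), g(y)) = B(x, y) for all x, y ∈ V. Then for every nonzero ρ ∈ ℂ, the eigenspace of g for the eigenvalue ρ and the eigenspace of g for the eigenvalue ρ⁻¹ have the same dimension. -/

import Mathlib

open Module LinearMap

/-- finrank of kernel of dual map equals finrank of kernel, in finite dimension. -/
lemma finrank_ker_dualMap_eq {V : Type*} [AddCommGroup V] [Module ℂ V]
    [FiniteDimensional ℂ V] (f : V →ₗ[ℂ] V) :
    Module.finrank ℂ (LinearMap.ker f.dualMap) = Module.finrank ℂ (LinearMap.ker f) := by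
  have h1 := LinearMap.finrank_range_add_finrank_ker f.dualMap
  have h2 := LinearMap.finrank_range_add_finrank_ker f
  have h3 := LinearMap.finrank_range_dualMap_eq_finrank_range f
  have h4 : Module.finrank ℂ (Module.Dual ℂ V) = Module.finrank ℂ V :=
    Subspace.dual_finrank_eq
  omega

lemma dualMap_sub_smul_one {V : Type*} [AddCommGroup V] [Module ℂ V]
    (f : V →ₗ[ℂ] V) (ρ : ℂ) :
    (f - ρ • (1 : V →ₗ[ℂ] V)).dualMap = f.dualMap - ρ • (1 : Module.Dual ℂ V →ₗ[ℂ] Module.Dual ℂ V) := by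
  ext φ x
  simp [LinearMap.dualMap_apply']

/-- If `g` is a linear automorphism of a finite-dimensional complex vector space preserving a
nondegenerate symmetric bilinear form `B`, then for every nonzero `ρ : ℂ` the eigenspaces of `g`
for `ρ` and for `ρ⁻¹` have the same dimension. -/
theorem eigenspace_finrank_eq_of_preserves_bilin
    (V : Type*) [AddCommGroup V] [Module ℂ V] [FiniteDimensional ℂ V]
    (B : V →ₗ[ℂ] V →ₗ[ℂ] ℂ)
    (hsymm : ∀ x y : V, B x y = B y x)
    (hnd : ∀ x : V, (∀ y : V, B x y = 0) → x = 0)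
    (g : V ≃ₗ[ℂ] V) (hg : ∀ x y : V, B (g x) (g y) = B x y)
    (ρ : ℂ) (hρ : ρ ≠ 0) :
    Module.finrank ℂ (Module.End.eigenspace (g : V →ₗ[ℂ] V) ρ) =
      Module.finrank ℂ (Module.End.eigenspace (g : V →ₗ[ℂ] V) ρ⁻¹) := by
  have hndB : LinearMap.BilinForm.Nondegenerate (B : LinearMap.BilinForm ℂ V) :=
    ⟨fun x hx => hnd x hx, fun y hy => hnd y (fun x => (hsymm y x).trans (hy x))⟩
  set e : V ≃ₗ[ℂ] Module.Dual ℂ V := LinearMap.BilinForm.toDual B hndB with he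
  have he_apply : ∀ x y : V, e x y = B x y := fun _ _ => rfl
  set h : V →ₗ[ℂ] V := (g.symm : V →ₗ[ℂ] V) with hh
  -- key: B x (g⁻¹ y) = B (g x) y
  have key : ∀ x y : V, B x (g.symm y) = B (g x) y := by
    intro x y
    conv_rhs => rw [← g.apply_symm_apply y]
    rw [hg]
  -- e maps eigenspace g ρ to eigenspace (dualMap h) ρ and back
  have hmem : ∀ x : V, x ∈ Module.End.eigenspace (g : V →ₗ[ℂ] V) ρ ↔
      e x ∈ Module.End.eigenspace h.dualMap ρ := by
    intro x
    rw [Module.End.mem_eigenspace_iff, Module.End.mem_eigenspace_iff]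
    constructor
    · intro hx
      ext y
      simp only [LinearMap.dualMap_apply', LinearMap.smul_apply]
      show e x (h y) = ρ • e x y
      have h1 : h y = g.symm y := rfl
      rw [h1, he_apply, he_apply, key]
      have h2 : (g : V →ₗ[ℂ] V) x = ρ • x := hx
      simp only [LinearEquiv.coe_coe] at h2
      rw [h2, map_smul]
      simp [smul_eq_mul]
    · intro hx
      have hx' : ∀ y : V, B (g x) y = ρ * B x y := by
        intro y
        have hxy := congrFun (congrArg DFunLike.coe hx) y
        simp only [LinearMap.dualMap_apply', LinearMap.smul_apply] at hxy
        rw [LinearMap.comp_apply] at hxy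
        have h2 : h y = g.symm y := rfl
        rw [h2, he_apply, key, he_apply] at hxy
        simpa [smul_eq_mul] using hxy
      have hz : (g : V →ₗ[ℂ] V) x - ρ • x = 0 := by
        apply hnd
        intro y
        have : B ((g : V →ₗ[ℂ] V) x - ρ • x) y
            = B ((g : V →ₗ[ℂ] V) x) y - ρ * B x y := by
          simp [map_sub, LinearMap.sub_apply, smul_eq_mul]
        rw [this]
        have h3 : B ((g : V →ₗ[ℂ] V) x) y = B (g x) y := rfl
        rw [h3, hx' y, sub_self]
      show (g : V →ₗ[ℂ] V) x = ρ • x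
      linear_combination (norm := module) hz
  -- step 1
  have step1 : Module.finrank ℂ (Module.End.eigenspace (g : V →ₗ[ℂ] V) ρ) =
      Module.finrank ℂ (Module.End.eigenspace h.dualMap ρ) := by
    have hmap : (Module.End.eigenspace (g : V →ₗ[ℂ] V) ρ).map (e : V →ₗ[ℂ] Module.Dual ℂ V) =
        Module.End.eigenspace h.dualMap ρ := by
      ext φ
      simp only [Submodule.mem_map]
      constructor
      · rintro ⟨x, hx, rfl⟩
        exact (hmem x).mp hx
      · intro hφ
        exact ⟨e.symm φ, (hmem _).mpr (by simpa using hφ), by simp⟩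
    rw [← hmap]
    exact (Submodule.equivMapOfInjective (e : V →ₗ[ℂ] Module.Dual ℂ V) e.injective _).finrank_eq
  -- step 2
  have step2 : Module.finrank ℂ (Module.End.eigenspace h.dualMap ρ) =
      Module.finrank ℂ (Module.End.eigenspace h ρ) := by
    rw [Module.End.eigenspace_def, Module.End.eigenspace_def, ← dualMap_sub_smul_one]
    exact finrank_ker_dualMap_eq _
  -- step 3: eigenspace h ρ = eigenspace g ρ⁻¹
  have step3 : Module.End.eigenspace h ρ = Module.End.eigenspace (g : V →ₗ[ℂ] V) ρ⁻¹ := by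
    ext x
    rw [Module.End.mem_eigenspace_iff, Module.End.mem_eigenspace_iff]
    constructor
    · intro hx
      have hx' : g.symm x = ρ • x := hx
      have h1 : x = ρ • g x := by
        conv_lhs => rw [← g.apply_symm_apply x]
        rw [hx', map_smul]
      show g x = ρ⁻¹ • x
      calc g x = ρ⁻¹ • (ρ • g x) := by rw [smul_smul, inv_mul_cancel₀ hρ, one_smul]
        _ = ρ⁻¹ • x := by rw [← h1]
    · intro hx
      have hx' : g x = ρ⁻¹ • x := hx
      show g.symm x = ρ • x
      calc g.symm x = g.symm (ρ • (ρ⁻¹ • x)) := by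
            rw [smul_smul, mul_inv_cancel₀ hρ, one_smul]
        _ = g.symm (ρ • g x) := by rw [← hx']
        _ = ρ • g.symm (g x) := by rw [map_smul]
        _ = ρ • x := by rw [g.symm_apply_apply]
  rw [step1, step2, step3]
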